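/- For a Tychonoff space X, if C_p(X) (the space of continuous real-valued functions on X with the topology of pointwise convergence) satisfies α_4 at the zero function, then it satisfies α_{2^-} at the zero function: given for each n a sequence (f_{nm})_m of continuous functions converging pointwise to 0, there are indices m_1 < m_2 < ... such that ⋃_n {f_{1 m_n}, ..., f_{n m_n}} converges to 0 in C_p(X). -/

import Mathlib

open Filter Topology Set

/-- A countably infinite set converging to `x`: `x` is not in the set, and the set is
cofinitely contained in every neighborhood of `x`. -/
def ConvSeq {X : Type*} [TopologicalSpace X] (S : Set X) (x : X) : Prop :=
  S.Countable ∧ S.Infinite ∧ x ∉ S ∧ ∀ U ∈ nhds x, (S \ U).Finite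

/-- A set converges to `x` in the weak sense: all but finitely many of its elements
are in every neighborhood of `x`. -/
def SetConv {X : Type*} [TopologicalSpace X] (S : Set X) (x : X) : Prop :=
  ∀ U ∈ nhds x, (S \ U).Finite
/-- `C_p(X)`: continuous real-valued functions on `X` with the topology of pointwise
convergence (inherited from the product topology on `X → ℝ`). -/
abbrev Cp (X : Type*) [TopologicalSpace X] : Type _ := {f : X → ℝ // Continuous f}

/-- The zero function of `C_p(X)`. -/
def cpZero (X : Type*) [TopologicalSpace X] : Cp X := ⟨fun _ => 0, continuous_const⟩

/-- Recursively pick a point of `Ioo (a k) (a k + w k)` distinct from all previous picks. -/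
noncomputable def pickD (a w : ℕ → ℝ) (hw : ∀ k, 0 < w k) : ℕ → ℝ := fun k =>
  (((Set.Ioo_infinite (by linarith [hw k] : a k < a k + w k)).diff
    (Set.finite_range fun i : Fin k => pickD a w hw i.1)).nonempty).some
termination_by k => k
decreasing_by all_goals exact i.isLt

theorem pickD_spec (a w : ℕ → ℝ) (hw : ∀ k, 0 < w k) (k : ℕ) :
    pickD a w hw k ∈ (Set.Ioo (a k) (a k + w k)) \ (Set.range fun i : Fin k => pickD a w hw i.1) := by
  rw [pickD]
  exact Set.Nonempty.some_mem _

theorem pickD_inj (a w : ℕ → ℝ) (hw : ∀ k, 0 < w k) : Function.Injective (pickD a w hw) := by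
  intro i k h
  by_contra hne
  rcases Nat.lt_or_ge i k with hik | hik
  · exact (pickD_spec a w hw k).2 ⟨⟨i, hik⟩, h⟩
  · exact (pickD_spec a w hw i).2 ⟨⟨k, lt_of_le_of_ne hik (Ne.symm hne)⟩, h.symm⟩

theorem tendsto_cp_iff {X : Type*} [TopologicalSpace X] {u : ℕ → Cp X} {v : Cp X} :
    Tendsto u atTop (nhds v) ↔ ∀ x, Tendsto (fun m => (u m).1 x) atTop (nhds (v.1 x)) := by
  rw [Topology.IsEmbedding.subtypeVal.isInducing.tendsto_nhds_iff]
  exact tendsto_pi_nhds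

/-- Solid neighborhoods: every neighborhood of `0` in `C_p(X)` absorbs functions dominated
pointwise by a function in a smaller neighborhood. -/
theorem solid_nhds {X : Type*} [TopologicalSpace X] {U : Set (Cp X)} (hU : U ∈ nhds (cpZero X)) :
    ∃ V ∈ nhds (cpZero X), ∀ φ ψ : Cp X, (∀ x, |φ.1 x| ≤ ψ.1 x) → ψ ∈ V → φ ∈ U := by
  rw [Topology.IsEmbedding.subtypeVal.isInducing.nhds_eq_comap, Filter.mem_comap] at hU
  obtain ⟨W, hW, hWU⟩ := hU
  rw [nhds_pi, Filter.mem_pi] at hW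
  obtain ⟨I, hIfin, t, ht, htW⟩ := hW
  choose ε hε hball using fun x => Metric.mem_nhds_iff.mp (ht x)
  refine ⟨Subtype.val ⁻¹' I.pi (fun x => Metric.ball ((cpZero X).1 x) (ε x)), ?_, ?_⟩
  · rw [Topology.IsEmbedding.subtypeVal.isInducing.nhds_eq_comap]
    refine Filter.preimage_mem_comap ?_
    rw [nhds_pi, Filter.mem_pi]
    exact ⟨I, hIfin, _, fun x => Metric.ball_mem_nhds _ (hε x), subset_rfl⟩
  · intro φ ψ hle hψ
    apply hWU
    refine htW ?_
    intro x hx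
    have h1 : ψ.1 x ∈ Metric.ball ((cpZero X).1 x) (ε x) := hψ x hx
    have h2 : |ψ.1 x| < ε x := by
      simpa [cpZero, Real.dist_eq] using h1
    have h3 : |φ.1 x| < ε x := lt_of_le_of_lt ((hle x).trans (le_abs_self _)) h2
    apply hball x
    simpa [cpZero, Real.dist_eq] using h3

/-- The Scheepers sums `x ↦ ∑_{j ≤ n} |f j m x|`. -/
noncomputable def gSum {X : Type*} [TopologicalSpace X] (f : ℕ → ℕ → Cp X) (n m : ℕ) : Cp X :=
  ⟨fun x => ∑ j ∈ Finset.range (n+1), |(f j m).1 x|,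
    continuous_finset_sum _ fun j _ => ((f j m).2).abs⟩

@[simp] theorem gSum_apply {X : Type*} [TopologicalSpace X] (f : ℕ → ℕ → Cp X) (n m : ℕ)
    (x : X) : (gSum f n m).1 x = ∑ j ∈ Finset.range (n+1), |(f j m).1 x| := rfl

/-- The perturbed Scheepers sums. -/
noncomputable def hFun {X : Type*} [TopologicalSpace X] (f : ℕ → ℕ → Cp X) (c : ℕ → ℕ → ℝ)
    (n m : ℕ) : Cp X :=
  ⟨fun x => (gSum f n m).1 x + c n m, (gSum f n m).2.add continuous_const⟩

@[simp] theorem hFun_apply {X : Type*} [TopologicalSpace X] (f : ℕ → ℕ → Cp X) (c : ℕ → ℕ → ℝ)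
    (n m : ℕ) (x : X) : (hFun f c n m).1 x = (gSum f n m).1 x + c n m := rfl

/-- For a Tychonoff space `X`, if `C_p(X)` is α₄ at `0` then it is α₂⁻ at `0`. -/
theorem cp_alpha4_implies_alpha2minus {X : Type*} [TopologicalSpace X] [T35Space X]
    (h4 : ∀ S : ℕ → Set (Cp X), Pairwise (Function.onFun Disjoint S) →
      (∀ n, ConvSeq (S n) (cpZero X)) →
      ∃ T, T ⊆ ⋃ n, S n ∧ ConvSeq T (cpZero X) ∧ {n | (S n ∩ T).Nonempty}.Infinite)
    (f : ℕ → ℕ → Cp X) (hf : ∀ n, Tendsto (f n) atTop (nhds (cpZero X))) :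
    ∃ m : ℕ → ℕ, StrictMono m ∧
      SetConv {z | ∃ n, ∃ j ≤ n, z = f j (m n)} (cpZero X) := by
  classical
  rcases isEmpty_or_nonempty X with hX | hX
  · have hsub : Subsingleton (Cp X) :=
      ⟨fun a b => Subtype.ext (funext fun x => hX.elim x)⟩
    have : Finite (Cp X) := Finite.of_subsingleton
    exact ⟨id, strictMono_id, fun U _ => Set.toFinite _⟩
  obtain ⟨x₀⟩ := hX
  have hfp : ∀ j x, Tendsto (fun m => (f j m).1 x) atTop (nhds 0) := fun j x =>
    tendsto_cp_iff.mp (hf j) x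
  set g : ℕ → ℕ → Cp X := gSum f with hgdef
  have hgp : ∀ n x, Tendsto (fun m => (g n m).1 x) atTop (nhds 0) := by
    intro n x
    have h1 : Tendsto (fun m => ∑ j ∈ Finset.range (n+1), |(f j m).1 x|) atTop
        (nhds (∑ _j ∈ Finset.range (n+1), (0:ℝ))) :=
      tendsto_finset_sum _ fun j _ => by simpa using (hfp j x).abs
    simp only [hgdef, gSum_apply]
    simpa using h1
  have hg0 : ∀ n m x, 0 ≤ (g n m).1 x := by
    intro n m x
    simp only [hgdef, gSum_apply]
    exact Finset.sum_nonneg fun j _ => abs_nonneg _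
  have hgmono : ∀ n m j x, j ≤ n → |(f j m).1 x| ≤ (g n m).1 x := by
    intro n m j x hj
    simp only [hgdef, gSum_apply]
    exact Finset.single_le_sum (f := fun j => |(f j m).1 x|) (fun i _ => abs_nonneg _)
      (Finset.mem_range.mpr (Nat.lt_succ_of_le hj))
  -- encoding and perturbation constants
  set e : ℕ × ℕ ≃ ℕ := Denumerable.eqv (ℕ × ℕ) with hedef
  set a : ℕ → ℝ := fun k => (g (e.symm k).1 (e.symm k).2).1 x₀ with hadef
  set w : ℕ → ℝ := fun k => 1 / ((e.symm k).2 + 1) with hwdef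
  have hw : ∀ k, 0 < w k := fun k => by positivity
  set c : ℕ → ℕ → ℝ := fun n m => pickD a w hw (e (n, m)) - a (e (n, m)) with hcdef
  have hae : ∀ n m, a (e (n, m)) = (g n m).1 x₀ := by
    intro n m; rw [hadef]; simp
  have hwe : ∀ n m : ℕ, w (e (n, m)) = 1 / (m + 1) := by
    intro n m; rw [hwdef]; simp
  have hc_pos : ∀ n m, 0 < c n m := fun n m =>
    sub_pos.mpr (pickD_spec a w hw (e (n, m))).1.1
  have hc_lt : ∀ n m : ℕ, c n m < 1 / (m + 1) := by
    intro n m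
    have h1 := (pickD_spec a w hw (e (n, m))).1.2
    rw [hwe n m] at h1
    rw [hcdef]
    simp only
    linarith
  set H : ℕ → ℕ → Cp X := hFun f c with hHdef
  have hHx₀ : ∀ n m, (H n m).1 x₀ = pickD a w hw (e (n, m)) := by
    intro n m
    simp only [hHdef, hFun_apply, ← hgdef]
    rw [hcdef]
    simp only
    rw [hae n m]
    ring
  have hHinj : ∀ n m n' m', H n m = H n' m' → (n, m) = (n', m') := by
    intro n m n' m' hh
    have h1 : pickD a w hw (e (n, m)) = pickD a w hw (e (n', m')) := by
      rw [← hHx₀, ← hHx₀, hh]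
    exact e.injective (pickD_inj a w hw h1)
  have hH0 : ∀ n m, H n m ≠ cpZero X := by
    intro n m hh
    have h1 : (H n m).1 x₀ = 0 := by rw [hh]; rfl
    rw [hHx₀] at h1
    have h2 := (pickD_spec a w hw (e (n, m))).1.1
    have h3 : 0 ≤ a (e (n, m)) := by rw [hae]; exact hg0 n m x₀
    linarith
  have hHtend : ∀ n, Tendsto (H n) atTop (nhds (cpZero X)) := by
    intro n
    rw [tendsto_cp_iff]
    intro x
    have h1 : Tendsto (fun m => c n m) atTop (nhds 0) := by
      apply squeeze_zero (fun m => (hc_pos n m).le) (fun m => (hc_lt n m).le)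
      exact tendsto_one_div_add_atTop_nhds_zero_nat
    have h2 := (hgp n x).add h1
    simpa [cpZero, hHdef, hFun_apply, ← hgdef] using h2
  -- the α₄ application
  set S : ℕ → Set (Cp X) := fun n => H n '' Set.Ici n with hSdef
  have hSdisj : Pairwise (Function.onFun Disjoint S) := by
    intro n n' hne
    rw [Function.onFun, Set.disjoint_left]
    rintro z ⟨m, _, rfl⟩ ⟨m', _, hz⟩
    exact hne (congrArg Prod.fst (hHinj n' m' n m hz)).symm
  have hSconv : ∀ n, ConvSeq (S n) (cpZero X) := by
    intro n
    refine ⟨(Set.to_countable _).image _, ?_, ?_, ?_⟩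
    · refine (Set.Ici_infinite n).image ?_
      intro m _ m' _ hm
      exact (Prod.mk.injEq _ _ _ _ ▸ (hHinj n m n m' hm) : n = n ∧ m = m').2
    · rintro ⟨m, _, hz⟩
      exact hH0 n m hz
    · intro U hU
      have h1 : ∀ᶠ m in atTop, H n m ∈ U := (hHtend n).eventually_mem hU
      obtain ⟨N, hN⟩ := eventually_atTop.mp h1
      refine Set.Finite.subset ((Set.finite_Iio N).image (H n)) ?_
      rintro z ⟨⟨m, _, rfl⟩, hzU⟩
      refine ⟨m, ?_, rfl⟩
      by_contra hm
      exact hzU (hN m (le_of_not_gt hm))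
  obtain ⟨T, hTsub, ⟨_, _, _, hTconv⟩, hI⟩ := h4 S hSdisj hSconv
  -- choose the diagonal indices
  have step : ∀ p : ℕ × ℕ, ∃ q : ℕ × ℕ,
      p.1 < q.1 ∧ p.2 < q.1 ∧ q.1 ≤ q.2 ∧ H q.1 q.2 ∈ T := by
    intro p
    obtain ⟨n, hnI, hn⟩ := hI.exists_gt (max p.1 p.2)
    obtain ⟨z, hzS, hzT⟩ := hnI
    obtain ⟨μ, hμ, rfl⟩ := hzS
    exact ⟨(n, μ), lt_of_le_of_lt (le_max_left _ _) hn,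
      lt_of_le_of_lt (le_max_right _ _) hn, hμ, hzT⟩
  choose st hst1 hst2 hst3 hst4 using step
  set P : ℕ → ℕ × ℕ := fun k => st^[k+1] (0, 0) with hPdef
  have hPit : ∀ k, P k = st (st^[k] (0, 0)) := fun k =>
    Function.iterate_succ_apply' st k (0, 0)
  have hPsucc : ∀ k, P (k+1) = st (P k) := fun k =>
    Function.iterate_succ_apply' st (k+1) (0, 0)
  have hPle : ∀ k, (P k).1 ≤ (P k).2 := by
    intro k; rw [hPit k]; exact hst3 _
  have hPT : ∀ k, H (P k).1 (P k).2 ∈ T := by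
    intro k; rw [hPit k]; exact hst4 _
  have hP1mono : StrictMono fun k => (P k).1 := by
    apply strictMono_nat_of_lt_succ
    intro k
    rw [hPsucc k]
    exact hst1 _
  have hP2mono : StrictMono fun k => (P k).2 := by
    apply strictMono_nat_of_lt_succ
    intro k
    have h1 : (P k).2 < (P (k+1)).1 := by rw [hPsucc k]; exact hst2 _
    exact lt_of_lt_of_le h1 (hPle (k+1))
  have hkle : ∀ k, k ≤ (P k).1 := fun k => hP1mono.le_apply
  refine ⟨fun k => (P k).2, hP2mono, ?_⟩
  intro U hU
  obtain ⟨V, hV, hsolid⟩ := solid_nhds hU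
  set τ : ℕ → Cp X := fun k => H (P k).1 (P k).2 with hτdef
  have hτinj : Function.Injective τ := by
    intro k k' hk
    exact hP1mono.injective (congrArg Prod.fst (hHinj _ _ _ _ hk))
  have hKfin : {k | τ k ∉ V}.Finite := by
    have h1 : {k | τ k ∉ V} = τ ⁻¹' (T \ V) := by
      ext k
      simp only [Set.mem_setOf_eq, Set.mem_preimage, Set.mem_diff]
      exact ⟨fun h => ⟨hPT k, h⟩, fun h => h.2⟩
    rw [h1]
    exact Set.Finite.preimage (hτinj.injOn) (hTconv V hV)
  have key : ∀ k, τ k ∈ V → ∀ j ≤ k, f j ((P k).2) ∈ U := by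
    intro k hk j hj
    refine hsolid _ _ ?_ hk
    intro x
    have h1 : |(f j ((P k).2)).1 x| ≤ (g (P k).1 (P k).2).1 x :=
      hgmono _ _ _ _ (hj.trans (hkle k))
    have h2 := hc_pos (P k).1 (P k).2
    calc |(f j ((P k).2)).1 x| ≤ (g (P k).1 (P k).2).1 x := h1
      _ ≤ (g (P k).1 (P k).2).1 x + c (P k).1 (P k).2 := by linarith
      _ = (τ k).1 x := by simp [hτdef, hHdef, hgdef]
  refine Set.Finite.subset
    ((hKfin.biUnion fun k _ => (Set.finite_Iic k).image fun j => (j, k)).image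
      fun p : ℕ × ℕ => f p.1 ((P p.2).2)) ?_
  rintro z ⟨⟨n, j, hj, rfl⟩, hzU⟩
  have hnK : n ∈ {k | τ k ∉ V} := by
    intro hV'
    exact hzU (key n hV' j hj)
  exact ⟨(j, n), Set.mem_biUnion hnK ⟨j, hj, rfl⟩, rfl⟩
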